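/- Let X be a real vector space equipped with the core convex topology τ_c, and let A be a nonempty subset of X having finitely many convex components A_1, …, A_n, each of which is relatively solid. Then cl_c(A) = ∪_{i=1}^{n} vcl(A_i). -/

import Mathlib

open Pointwise

/-- Algebraic interior (core) of a set `A` in a real vector space:
`cor A = {x ∈ A | ∀ d, ∃ δ > 0, ∀ λ ∈ [0, δ], x + λ • d ∈ A}`. -/
def cor {X : Type*} [AddCommGroup X] [Module ℝ X] (A : Set X) : Set X :=
  {x | x ∈ A ∧ ∀ d : X, ∃ δ : ℝ, 0 < δ ∧ ∀ lam ∈ Set.Icc (0 : ℝ) δ, x + lam • d ∈ A}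

/-- Relative algebraic interior of `A`: directions are taken in `L(A) = span (A - A)`. -/
def icr {X : Type*} [AddCommGroup X] [Module ℝ X] (A : Set X) : Set X :=
  {x | x ∈ A ∧ ∀ d ∈ Submodule.span ℝ (A - A),
    ∃ δ : ℝ, 0 < δ ∧ ∀ lam ∈ Set.Icc (0 : ℝ) δ, x + lam • d ∈ A}

/-- Vectorial closure of `A`:
`vcl A = {b | ∃ d, ∀ δ > 0, ∃ λ ∈ [0, δ], b + λ • d ∈ A}`. -/
def vcl {X : Type*} [AddCommGroup X] [Module ℝ X] (A : Set X) : Set X :=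
  {b | ∃ d : X, ∀ δ : ℝ, 0 < δ → ∃ lam ∈ Set.Icc (0 : ℝ) δ, b + lam • d ∈ A}

/-- The core convex topology `τ_c`: the topology whose open sets are the unions of
members of `𝔅 = {A | A convex and cor A = A}`; since `𝔅` is a topological basis
(closed under binary intersection, contains `X` and `∅`), this is the topology
generated by `𝔅`. -/
def tauc (X : Type*) [AddCommGroup X] [Module ℝ X] : TopologicalSpace X :=
  TopologicalSpace.generateFrom {A : Set X | Convex ℝ A ∧ cor A = A}

/-- `B` is a convex component of `A`: a maximal (w.r.t. inclusion) convex subset of `A`. -/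
def IsConvexComponent {X : Type*} [AddCommGroup X] [Module ℝ X] (A B : Set X) : Prop :=
  B ⊆ A ∧ Convex ℝ B ∧ ∀ C : Set X, C ⊆ A → Convex ℝ C → B ⊆ C → C = B

section Aux

variable {X : Type*} [AddCommGroup X] [Module ℝ X]

lemma sub_mem_spanSub {B : Set X} {p q : X} (hp : p ∈ B) (hq : q ∈ B) :
    p - q ∈ Submodule.span ℝ (B - B) :=
  Submodule.subset_span (Set.sub_mem_sub hp hq)

lemma cor_subset (S : Set X) : cor S ⊆ S := fun _ hx => hx.1

lemma icr_segment {B : Set X} (hB : Convex ℝ B) {a b : X} (ha : a ∈ icr B) (hb : b ∈ B)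
    {t : ℝ} (ht0 : 0 ≤ t) (ht1 : t < 1) : (1 - t) • a + t • b ∈ icr B := by
  have h1t : (0 : ℝ) < 1 - t := by linarith
  refine ⟨hB ha.1 hb h1t.le ht0 (by ring), ?_⟩
  intro d hd
  obtain ⟨δ, hδ, h⟩ := ha.2 d hd
  refine ⟨(1 - t) * δ, by positivity, ?_⟩
  rintro ν ⟨hν0, hν1⟩
  have hmem : a + (ν / (1 - t)) • d ∈ B := by
    refine h (ν / (1 - t)) ⟨by positivity, ?_⟩
    rw [div_le_iff₀ h1t]
    linarith [hν1]
  have key : (1 - t) • a + t • b + ν • d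
      = (1 - t) • (a + (ν / (1 - t)) • d) + t • b := by
    rw [smul_add, smul_smul, mul_div_cancel₀ _ h1t.ne']
    abel
  rw [key]
  exact hB hmem hb h1t.le ht0 (by ring)

lemma icr_relOpen {B : Set X} (hB : Convex ℝ B) {g : X} (hg : g ∈ icr B) {d : X}
    (hd : d ∈ Submodule.span ℝ (B - B)) :
    ∃ δ : ℝ, 0 < δ ∧ ∀ μ ∈ Set.Icc (0 : ℝ) δ, g + μ • d ∈ icr B := by
  obtain ⟨δ, hδ, h⟩ := hg.2 d hd
  have hb : g + δ • d ∈ B := h δ ⟨hδ.le, le_refl δ⟩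
  refine ⟨δ / 2, by positivity, ?_⟩
  rintro μ ⟨hμ0, hμ1⟩
  have ht1 : μ / δ < 1 := by
    rw [div_lt_one hδ]; linarith
  have := icr_segment hB hg hb (t := μ / δ) (by positivity) ht1
  have e : (1 - μ / δ) • g + (μ / δ) • (g + δ • d) = g + μ • d := by
    rw [smul_add, smul_smul, div_mul_cancel₀ _ hδ.ne', sub_smul, one_smul]
    abel
  rwa [e] at this

lemma icr_convex {B : Set X} (hB : Convex ℝ B) : Convex ℝ (icr B) := by
  rintro p hp q hq s t hs ht hst
  obtain rfl : t = 1 - s := by linarith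
  refine ⟨hB hp.1 hq.1 hs ht hst, ?_⟩
  intro d hd
  obtain ⟨δ1, hδ1, h1⟩ := hp.2 d hd
  obtain ⟨δ2, hδ2, h2⟩ := hq.2 d hd
  refine ⟨min δ1 δ2, lt_min hδ1 hδ2, ?_⟩
  rintro μ ⟨hμ0, hμ1⟩
  have e : s • (p + μ • d) + (1 - s) • (q + μ • d) = s • p + (1 - s) • q + μ • d := by
    module
  have := hB (h1 μ ⟨hμ0, le_trans hμ1 (min_le_left _ _)⟩)
    (h2 μ ⟨hμ0, le_trans hμ1 (min_le_right _ _)⟩) hs ht hst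
  rwa [e] at this

/-- Half-spaces `{z | r < f z}` are basic open sets of `τ_c`. -/
lemma halfspace_basic (f : X →ₗ[ℝ] ℝ) (r : ℝ) :
    Convex ℝ {z : X | r < f z} ∧ cor {z : X | r < f z} = {z : X | r < f z} := by
  constructor
  · have : {z : X | r < f z} = f ⁻¹' (Set.Ioi r) := rfl
    rw [this]
    exact (convex_Ioi r).linear_preimage f
  · refine subset_antisymm (cor_subset _) ?_
    intro z hz
    refine ⟨hz, fun d => ?_⟩
    rcases le_or_gt 0 (f d) with hfd | hfd
    · refine ⟨1, one_pos, ?_⟩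
      rintro lam ⟨h0, _⟩
      show r < f (z + lam • d)
      rw [map_add, map_smul, smul_eq_mul]
      nlinarith [Set.mem_setOf_eq ▸ hz]
    · have hnd0 : (0:ℝ) < -f d := by linarith
      have hzr : (0:ℝ) < f z - r := by
        have h := hz; simp only [Set.mem_setOf_eq] at h; linarith
      refine ⟨(f z - r) / (2 * (-f d)), div_pos hzr (by positivity), ?_⟩
      rintro lam ⟨h0, h1⟩
      show r < f (z + lam • d)
      rw [map_add, map_smul, smul_eq_mul]
      have hz' : r < f z := hz
      have hnd : (0:ℝ) < -f d := by linarith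
      rw [le_div_iff₀ (by positivity)] at h1
      nlinarith

/-- The family `𝔅` is a topological basis for `τ_c`. -/
lemma taucBasis :
    @TopologicalSpace.IsTopologicalBasis X (tauc X)
      {A : Set X | Convex ℝ A ∧ cor A = A} := by
  letI := tauc X
  refine { exists_subset_inter := ?_, sUnion_eq := ?_, eq_generateFrom := rfl }
  · rintro t₁ ⟨h1c, h1o⟩ t₂ ⟨h2c, h2o⟩ x hx
    refine ⟨t₁ ∩ t₂, ⟨h1c.inter h2c, ?_⟩, hx, le_refl _⟩
    refine subset_antisymm (cor_subset _) ?_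
    rintro z ⟨hz1, hz2⟩
    refine ⟨⟨hz1, hz2⟩, fun d => ?_⟩
    obtain ⟨δ1, hδ1, hh1⟩ := (h1o.symm ▸ hz1 : z ∈ cor t₁).2 d
    obtain ⟨δ2, hδ2, hh2⟩ := (h2o.symm ▸ hz2 : z ∈ cor t₂).2 d
    refine ⟨min δ1 δ2, lt_min hδ1 hδ2, ?_⟩
    rintro lam ⟨hl0, hl1⟩
    exact ⟨hh1 lam ⟨hl0, le_trans hl1 (min_le_left _ _)⟩,
      hh2 lam ⟨hl0, le_trans hl1 (min_le_right _ _)⟩⟩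
  · refine Set.eq_univ_of_univ_subset ?_
    intro x _
    refine Set.mem_sUnion.mpr ⟨Set.univ, ⟨convex_univ, ?_⟩, trivial⟩
    refine subset_antisymm (cor_subset _) ?_
    intro z _
    exact ⟨trivial, fun d => ⟨1, one_pos, fun lam _ => trivial⟩⟩

lemma isOpen_basic {G : Set X} (h : Convex ℝ G ∧ cor G = G) :
    @IsOpen X (tauc X) G :=
  TopologicalSpace.isOpen_generateFrom_of_mem h

/-- Linear functional vanishing on a subspace and equal to `1` on a given vector
outside of it. -/
lemma exists_dual_of_not_mem (L : Submodule ℝ X) {v : X} (hv : v ∉ L) :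
    ∃ f : X →ₗ[ℝ] ℝ, (∀ l ∈ L, f l = 0) ∧ f v = 1 := by
  have hq : L.mkQ v ≠ 0 := by
    simpa [Submodule.Quotient.mk_eq_zero] using hv
  obtain ⟨φ, hφ⟩ : ∃ φ : Module.Dual ℝ (X ⧸ L), φ (L.mkQ v) ≠ 0 := by
    by_contra h
    push_neg at h
    exact hq ((Module.forall_dual_apply_eq_zero_iff ℝ _).mp h)
  refine ⟨(φ (L.mkQ v))⁻¹ • (φ.comp L.mkQ), fun l hl => ?_, ?_⟩
  · have : L.mkQ l = 0 := (Submodule.Quotient.mk_eq_zero L).mpr hl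
    simp [this]
  · simp only [LinearMap.smul_apply, LinearMap.coe_comp, Function.comp_apply, smul_eq_mul]
    exact inv_mul_cancel₀ hφ

/-- The `τ_c`-closure of a set is contained in its affine hull `a + span (B - B)`. -/
lemma closure_subset_affine {B : Set X} {a : X} (ha : a ∈ B) :
    @closure X (tauc X) B ⊆ {z | z - a ∈ Submodule.span ℝ (B - B)} := by
  letI := tauc X
  apply closure_minimal
  · intro b hb
    exact sub_mem_spanSub hb ha
  · rw [← isOpen_compl_iff, isOpen_iff_forall_mem_open]
    intro y hy
    have hy' : y - a ∉ Submodule.span ℝ (B - B) := hy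
    obtain ⟨f, hfL, hfv⟩ := exists_dual_of_not_mem _ hy'
    refine ⟨{z | f a < f z}, ?_, isOpen_basic (halfspace_basic f (f a)), ?_⟩
    · intro z hz
      intro hzM
      have : f (z - a) = 0 := hfL _ hzM
      rw [map_sub] at this
      have hz' : f a < f z := hz
      linarith
    · show f a < f y
      have : f y - f a = 1 := by rw [← map_sub, hfv]
      linarith

lemma vcl_subset_closure (B : Set X) : vcl B ⊆ @closure X (tauc X) B := by
  letI := tauc X
  intro x hx
  obtain ⟨d, hd⟩ := hx
  rw [taucBasis.mem_closure_iff]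
  rintro o ⟨hoc, hocor⟩ hxo
  have hxcor : x ∈ cor o := hocor.symm ▸ hxo
  obtain ⟨δ, hδ, h⟩ := hxcor.2 d
  obtain ⟨lam, hlam, hlamB⟩ := hd δ hδ
  exact ⟨x + lam • d, h lam hlam, hlamB⟩

lemma closure_subset_vcl {B : Set X} (hB : Convex ℝ B) {a : X} (ha : a ∈ icr B) :
    @closure X (tauc X) B ⊆ vcl B := by
  letI := tauc X
  set L := Submodule.span ℝ (B - B) with hLdef
  intro x hx
  have hxaff : x - a ∈ L := closure_subset_affine ha.1 hx
  have key : ∀ lam : ℝ, 0 < lam → lam ≤ 1 → x + lam • (a - x) ∈ B := by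
    intro lam h0 h1
    rcases eq_or_lt_of_le h1 with rfl | h1
    · have : x + (1 : ℝ) • (a - x) = a := by module
      rw [this]; exact ha.1
    · set c : ℝ := (1 - lam) / lam with hc
      have hc0 : 0 < c := by
        have : (0:ℝ) < 1 - lam := by linarith
        positivity
      obtain ⟨W, hW⟩ := Submodule.exists_isCompl L
      set G0 : Set X := {y | a + c • (x - y) ∈ icr B} with hG0def
      set G : Set X := G0 + (W : Set X) with hGdef
      -- points of G0 differ from x by a vector of L
      have hG0aff : ∀ y ∈ G0, x - y ∈ L := by
        intro y hy
        have hyB : a + c • (x - y) ∈ B := hy.1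
        have h2 : c • (x - y) ∈ L := by
          have := sub_mem_spanSub hyB ha.1
          simpa using this
        have := L.smul_mem c⁻¹ h2
        rwa [smul_smul, inv_mul_cancel₀ hc0.ne', one_smul] at this
      -- G0 is "relatively algebraically open" in directions of L
      have hG0rel : ∀ g ∈ G0, ∀ dL ∈ L, ∃ η : ℝ, 0 < η ∧
          ∀ μ ∈ Set.Icc (0:ℝ) η, g + μ • dL ∈ G0 := by
        intro g hg dL hdL
        obtain ⟨η, hη, hrel⟩ := icr_relOpen hB hg (d := (-c) • dL) (L.smul_mem _ hdL)
        refine ⟨η, hη, fun μ hμ => ?_⟩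
        have := hrel μ hμ
        have e : a + c • (x - g) + μ • (-c) • dL = a + c • (x - (g + μ • dL)) := by
          module
        show a + c • (x - (g + μ • dL)) ∈ icr B
        rwa [e] at this
      -- G is a basic open set
      have hG0conv : Convex ℝ G0 := by
        rintro y1 hy1 y2 hy2 s t hs ht hst
        obtain rfl : t = 1 - s := by linarith
        have e : s • (a + c • (x - y1)) + (1 - s) • (a + c • (x - y2))
            = a + c • (x - (s • y1 + (1 - s) • y2)) := by module
        show a + c • (x - (s • y1 + (1 - s) • y2)) ∈ icr B
        rw [← e]
        exact icr_convex hB hy1 hy2 hs ht hst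
      have hGopen : Convex ℝ G ∧ cor G = G := by
        constructor
        · exact hG0conv.add W.convex
        · refine subset_antisymm (cor_subset _) ?_
          intro p hp
          obtain ⟨g, hg, w, hw, rfl⟩ := Set.mem_add.mp hp
          refine ⟨Set.mem_add.mpr ⟨g, hg, w, hw, rfl⟩, fun d => ?_⟩
          have hd : d ∈ L ⊔ W := by rw [hW.sup_eq_top]; trivial
          obtain ⟨dL, hdL, dW, hdW, rfl⟩ := Submodule.mem_sup.mp hd
          obtain ⟨η, hη, hrel⟩ := hG0rel g hg dL hdL
          refine ⟨η, hη, ?_⟩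
          rintro μ hμ
          have e : g + w + μ • (dL + dW) = (g + μ • dL) + (w + μ • dW) := by module
          rw [e]
          exact Set.mem_add.mpr ⟨g + μ • dL, hrel μ hμ, w + μ • dW,
            W.add_mem hw (W.smul_mem μ hdW), rfl⟩
      -- x belongs to G
      have hxG : x ∈ G := by
        refine Set.mem_add.mpr ⟨x, ?_, 0, W.zero_mem, add_zero x⟩
        show a + c • (x - x) ∈ icr B
        rw [sub_self, smul_zero, add_zero]
        exact ha
      -- pick a point of B in G
      obtain ⟨b, hbG, hbB⟩ := (taucBasis.mem_closure_iff.mp hx) G hGopen hxG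
      obtain ⟨g, hg, w, hw, rfl⟩ := Set.mem_add.mp hbG
      -- the W-part vanishes
      have hwL : w ∈ L := by
        have h1 : (g + w) - a ∈ L := sub_mem_spanSub hbB ha.1
        have h2 : x - g ∈ L := hG0aff g hg
        have := L.sub_mem (L.add_mem h1 h2) hxaff
        have e : ((g + w) - a) + (x - g) - (x - a) = w := by abel
        rwa [e] at this
      have hw0 : w = 0 := by
        have := hW.disjoint
        have : w ∈ (L ⊓ W : Submodule ℝ X) := Submodule.mem_inf.mpr ⟨hwL, hw⟩
        rwa [hW.inf_eq_bot, Submodule.mem_bot] at this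
      subst hw0
      rw [add_zero] at hbB
      -- conclude by convexity
      have hgB : a + c • (x - g) ∈ B := hg.1
      have hfin := hB hbB hgB (by linarith : (0:ℝ) ≤ 1 - lam) h0.le (by ring)
      have e : (1 - lam) • g + lam • (a + c • (x - g)) = x + lam • (a - x) := by
        rw [hc]
        have hlam : lam ≠ 0 := h0.ne'
        match_scalars
        · field_simp; ring
        · field_simp
        · field_simp; ring
      rwa [e] at hfin
  refine ⟨a - x, fun δ hδ => ?_⟩
  refine ⟨min δ 1, ⟨(lt_min hδ one_pos).le, min_le_left _ _⟩, ?_⟩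
  exact key _ (lt_min hδ one_pos) (min_le_right _ _)

/-- Every point of `A` lies in some convex component of `A` (Zorn's lemma). -/
lemma exists_component {A : Set X} {a : X} (haA : a ∈ A) :
    ∃ B, IsConvexComponent A B ∧ a ∈ B := by
  obtain ⟨m, hsub, hmax⟩ := zorn_subset_nonempty {C : Set X | C ⊆ A ∧ Convex ℝ C}
    (fun c hc hchain _ => ⟨⋃₀ c,
      ⟨Set.sUnion_subset fun s hs => (hc hs).1,
        hchain.directedOn.convex_sUnion fun s hs => (hc hs).2⟩,
      fun s hs => Set.subset_sUnion_of_mem hs⟩)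
    {a} ⟨Set.singleton_subset_iff.mpr haA, convex_singleton a⟩
  exact ⟨m, ⟨hmax.prop.1, hmax.prop.2,
    fun C hCA hCc hmC => subset_antisymm (hmax.2 ⟨hCA, hCc⟩ hmC) hmC⟩,
    hsub rfl⟩

end Aux

/-- If a nonempty set `A` has finitely many convex components, each of them
relatively solid, then the `τ_c`-closure of `A` is the union of the vectorial closures of
its convex components. -/
theorem stmt13 {X : Type*} [AddCommGroup X] [Module ℝ X] {A : Set X} (hA : A.Nonempty)
    (hfin : {B : Set X | IsConvexComponent A B}.Finite)
    (hsolid : ∀ B : Set X, IsConvexComponent A B → (icr B).Nonempty) :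
    @closure X (tauc X) A = ⋃ B ∈ {B : Set X | IsConvexComponent A B}, vcl B := by
  letI := tauc X
  have hcover : A = ⋃ B ∈ {B : Set X | IsConvexComponent A B}, B := by
    apply subset_antisymm
    · intro a haA
      obtain ⟨B, hB, haB⟩ := exists_component haA
      exact Set.mem_biUnion hB haB
    · exact Set.iUnion₂_subset fun B hB => hB.1
  have h1 : @closure X (tauc X) A
      = ⋃ B ∈ {B : Set X | IsConvexComponent A B}, @closure X (tauc X) B := by
    conv_lhs => rw [hcover]
    exact hfin.closure_biUnion (fun B => B)
  rw [h1]
  refine Set.iUnion₂_congr fun B hB => ?_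
  obtain ⟨a, ha⟩ := hsolid B hB
  exact subset_antisymm (closure_subset_vcl hB.2.1 ha) (vcl_subset_closure B)
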